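/- Let P be a symmetric convex polygon with dual Q, and let β_i = 1/[P_i,P_{i+1}], α_i = 1/[Q_i,Q_{i+1}]. Then [∇Q_i, ΔQ_i] = β_{i-1}β_iβ_{i+1}·[∇P_i, ΔP_i]·[ΔP_i, ΔP_{i+1}] > 0, i.e., the dual polygon is locally convex. -/

import Mathlib

/-- Determinant of the 2×2 matrix with columns `v` and `w`. -/
noncomputable def det2 (v w : ℝ × ℝ) : ℝ := v.1 * w.2 - v.2 * w.1

theorem stmt_2 (n : ℕ) (hn : 0 < n) (P Q : ℤ → ℝ × ℝ) (β : ℤ → ℝ)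
    (hper : ∀ i, P (i + 2 * n) = P i)
    (hconv : ∀ i, 0 < det2 (P i) (P (i + 1)))
    (hloc : ∀ i, 0 < det2 (P i - P (i - 1)) (P (i + 1) - P i))
    (hsym : ∀ i, P (i + n) = -P i)
    (hβ : ∀ i, β i = (det2 (P i) (P (i + 1)))⁻¹)
    (hQ : ∀ i, Q i = β i • (P (i + 1) - P i)) :
    ∀ i, det2 (Q i - Q (i - 1)) (Q (i + 1) - Q i)
        = β (i - 1) * β i * β (i + 1) * det2 (P i - P (i - 1)) (P (i + 1) - P i)
          * det2 (P (i + 1) - P i) (P (i + 2) - P (i + 1))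
      ∧ 0 < det2 (Q i - Q (i - 1)) (Q (i + 1) - Q i) := by
  intro i
  have e1 : i - 1 + 1 = i := by ring
  have e2 : i + 1 + 1 = i + 2 := by ring
  have h1 := hconv (i - 1); rw [e1] at h1
  have h2 := hconv i
  have h3 := hconv (i + 1); rw [e2] at h3
  have hb1 : 0 < β (i - 1) := by rw [hβ, e1]; exact inv_pos.mpr h1
  have hb2 : 0 < β i := by rw [hβ]; exact inv_pos.mpr h2
  have hb3 : 0 < β (i + 1) := by rw [hβ, e2]; exact inv_pos.mpr h3
  have H1 : (P (i-1)).1 * (P i).2 - (P (i-1)).2 * (P i).1 ≠ 0 := by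
    simpa [det2] using h1.ne'
  have H2 : (P i).1 * (P (i+1)).2 - (P i).2 * (P (i+1)).1 ≠ 0 := by
    simpa [det2] using h2.ne'
  have H3 : (P (i+1)).1 * (P (i+2)).2 - (P (i+1)).2 * (P (i+2)).1 ≠ 0 := by
    simpa [det2] using h3.ne'
  have key : det2 (Q i - Q (i - 1)) (Q (i + 1) - Q i)
      = β (i - 1) * β i * β (i + 1) * det2 (P i - P (i - 1)) (P (i + 1) - P i)
        * det2 (P (i + 1) - P i) (P (i + 2) - P (i + 1)) := by
    simp only [hQ, hβ, e1, e2, det2, Prod.fst_sub, Prod.snd_sub, Prod.smul_fst,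
      Prod.smul_snd, smul_eq_mul]
    have H1' : (P i).2 * (P (i - 1)).1 - (P i).1 * (P (i - 1)).2 ≠ 0 := fun h => H1 (by linarith)
    field_simp
    ring
  refine ⟨key, ?_⟩
  rw [key]
  have hl := hloc i
  have hl2 := hloc (i + 1); rw [show i + 1 - 1 = i from by ring, e2] at hl2
  exact mul_pos (mul_pos (mul_pos (mul_pos hb1 hb2) hb3) hl) hl2
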